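/- If there exists an MDS code over alphabet Fin d of wordlength n ≥ 3 and minimum distance ⌈n/2⌉ + 1 (hence of size d^(⌊n/2⌋)), then there exists an MDS code over Fin d of wordlength n - 1 and minimum distance ⌈(n-1)/2⌉ + 1 (hence of size d^(⌊(n-1)/2⌋)). -/

import Mathlib

/-- If an MDS code of wordlength `n ≥ 3` and minimum distance `⌈n/2⌉ + 1`
(hence of size `d ^ ⌊n/2⌋`) exists over `Fin d`, then an MDS code of wordlength
`n - 1` and minimum distance `⌈(n-1)/2⌉ + 1` (of size `d ^ ⌊(n-1)/2⌋`) exists. -/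
lemma puncture_dist_le (d n : ℕ) (hn : 2 ≤ n) (w w' : Fin n → Fin d) :
    hammingDist w w' ≤
      hammingDist (fun i : Fin (n - 1) => w ⟨i.1, by omega⟩)
        (fun i : Fin (n - 1) => w' ⟨i.1, by omega⟩) +
      (if w ⟨n - 1, by omega⟩ = w' ⟨n - 1, by omega⟩ then 0 else 1) := by
  classical
  unfold hammingDist
  set A := Finset.univ.filter fun i : Fin n => w i ≠ w' i with hA
  set B := Finset.univ.filter (fun i : Fin (n - 1) =>
      w ⟨i.1, by omega⟩ ≠ w' ⟨i.1, by omega⟩) with hB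
  set last : Fin n := ⟨n - 1, by omega⟩ with hlast
  have herase : (A.erase last).card ≤ B.card := by
    apply Finset.card_le_card_of_injOn (fun i => ⟨min i.1 (n - 2), by omega⟩)
    · intro i hi
      simp only [hA, Finset.mem_coe, Finset.mem_erase, Finset.mem_filter, Finset.mem_univ, true_and] at hi
      obtain ⟨hne, hiw⟩ := hi
      have hi1 : i.1 < n - 1 := by
        have h2 := i.2
        by_contra h
        exact hne (Fin.ext (by simp [hlast]; omega))
      have heq : (⟨min i.1 (n - 2), by omega⟩ : Fin n) = i := Fin.ext (by simp; omega)
      simp only [hB, Finset.mem_coe, Finset.mem_filter, Finset.mem_univ, true_and]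
      simpa [heq] using hiw
    · intro i hi j hj hij
      simp only [hA, Finset.mem_coe, Finset.mem_erase, Finset.mem_filter] at hi hj
      have hi1 : i.1 < n - 1 := by
        by_contra h
        exact hi.1 (Fin.ext (by simp [hlast]; omega))
      have hj1 : j.1 < n - 1 := by
        by_contra h
        exact hj.1 (Fin.ext (by simp [hlast]; omega))
      have := congrArg Fin.val hij
      simp at this
      exact Fin.ext (by omega)
  by_cases h : w last = w' last
  · have hnotmem : last ∉ A := by simp [hA, h]
    rw [Finset.erase_eq_of_notMem hnotmem] at herase
    simpa [h] using herase
  · have : A.card ≤ (A.erase last).card + 1 := by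
      by_cases hm : last ∈ A
      · rw [Finset.card_erase_of_mem hm]; omega
      · rw [Finset.erase_eq_of_notMem hm]; omega
    rw [if_neg h]
    omega

theorem mds_code_shorten (d n : ℕ) (hd : 0 < d) (hn : 3 ≤ n)
    (C : Finset (Fin n → Fin d)) (hcard : C.card = d ^ (n / 2))
    (hdist : ∀ w ∈ C, ∀ w' ∈ C, w ≠ w' → (n + 1) / 2 + 1 ≤ hammingDist w w') :
    ∃ C' : Finset (Fin (n - 1) → Fin d), C'.card = d ^ ((n - 1) / 2) ∧
      ∀ w ∈ C', ∀ w' ∈ C', w ≠ w' → (n - 1 + 1) / 2 + 1 ≤ hammingDist w w' := by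
  classical
  have h2n : 2 ≤ n := by omega
  have hlt : n - 1 < n := by omega
  let P : (Fin n → Fin d) → (Fin (n - 1) → Fin d) :=
    fun w i => w (Fin.castLE (Nat.sub_le n 1) i)
  let last : Fin n := ⟨n - 1, hlt⟩
  have key : ∀ w w' : Fin n → Fin d, hammingDist w w' ≤
      hammingDist (P w) (P w') + (if w last = w' last then 0 else 1) :=
    fun w w' => puncture_dist_le d n h2n w w'
  rcases Nat.even_or_odd n with he | ho
  · -- even case : shorten
    obtain ⟨m, hm⟩ := he
    have hsum : C.card = ∑ a : Fin d, (C.filter fun w => w last = a).card :=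
      Finset.card_eq_sum_card_fiberwise (fun w _ => Finset.mem_univ _)
    have hex : ∃ a : Fin d, d ^ ((n - 1) / 2) ≤ (C.filter fun w => w last = a).card := by
      by_contra hcon
      push_neg at hcon
      have hle : ∑ a : Fin d, (C.filter fun w => w last = a).card ≤
          ∑ _a : Fin d, (d ^ ((n - 1) / 2) - 1) := by
        apply Finset.sum_le_sum
        intro a _
        exact Nat.le_sub_one_of_lt (hcon a)
      rw [Finset.sum_const, Finset.card_univ, Fintype.card_fin, smul_eq_mul] at hle
      have hpow : d ^ (n / 2) = d * d ^ ((n - 1) / 2) := by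
        clear hle hcon hsum
        rw [← pow_succ']
        congr 1
        omega
      have hK : 1 ≤ d ^ ((n - 1) / 2) := Nat.one_le_pow _ _ hd
      have : d * d ^ ((n - 1) / 2) ≤ d * (d ^ ((n - 1) / 2) - 1) := by
        rw [← hpow, ← hcard, hsum]; exact hle
      have h9 := Nat.le_of_mul_le_mul_left this hd
      clear hle hcon hsum this
      omega
    obtain ⟨a, ha⟩ := hex
    obtain ⟨D, hDsub, hDcard⟩ := Finset.exists_subset_card_eq ha
    clear ha hsum
    have hDlast : ∀ w ∈ D, w last = a := by
      intro w hw
      have := hDsub hw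
      simp only [Finset.mem_filter] at this
      exact this.2
    have hDC : ∀ w ∈ D, w ∈ C := fun w hw => (Finset.mem_filter.mp (hDsub hw)).1
    have hinj : Set.InjOn P D := by
      intro w hw w' hw' hPw
      by_contra hne
      have h1 := hdist w (hDC w hw) w' (hDC w' hw') hne
      have h2 := key w w'
      rw [hPw, hammingDist_self, if_pos (by rw [hDlast w hw, hDlast w' hw'])] at h2
      omega
    refine ⟨D.image P, ?_, ?_⟩
    · rw [Finset.card_image_of_injOn hinj, hDcard]
    · rintro u hu u' hu' hne
      obtain ⟨w, hw, rfl⟩ := Finset.mem_image.mp hu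
      obtain ⟨w', hw', rfl⟩ := Finset.mem_image.mp hu'
      have hwne : w ≠ w' := fun h => hne (by rw [h])
      have h1 := hdist w (hDC w hw) w' (hDC w' hw') hwne
      have h2 := key w w'
      rw [if_pos (by rw [hDlast w hw, hDlast w' hw'])] at h2
      omega
  · -- odd case : puncture
    obtain ⟨m, hm⟩ := ho
    have hinj : Set.InjOn P C := by
      intro w hw w' hw' hPw
      by_contra hne
      have h1 := hdist w hw w' hw' hne
      have h2 := key w w'
      rw [hPw, hammingDist_self] at h2
      have : (if w last = w' last then 0 else 1) ≤ 1 := by split <;> omega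
      omega
    refine ⟨C.image P, ?_, ?_⟩
    · rw [Finset.card_image_of_injOn hinj, hcard]
      congr 1
      omega
    · rintro u hu u' hu' hne
      obtain ⟨w, hw, rfl⟩ := Finset.mem_image.mp hu
      obtain ⟨w', hw', rfl⟩ := Finset.mem_image.mp hu'
      have hwne : w ≠ w' := fun h => hne (by rw [h])
      have h1 := hdist w hw w' hw' hwne
      have h2 := key w w'
      have : (if w last = w' last then 0 else 1) ≤ 1 := by split <;> omega
      omega
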